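/- arXiv:2009.09340 — 3 statements merged into one kernel-verified Lean document; each statement's English description precedes it below -/
import Mathlib

section
/- Let n, k be positive integers with 1 ≤ k < n and e = gcd(k, n), and suppose n/e is even. If u ∈ F_q^* is a (2^e+1)-th power, i.e. u = w^{2^e+1} for some w ∈ F_q^*, then the linearized polynomial L_u(x) = u^{2^k}·x^{2^{2k}} + u·x has exactly 2^{2e} roots x in F_q. -/
open Finset

private lemma mersenne_step (a r : ℕ) :
    Nat.gcd (2 ^ a - 1) (2 ^ (a + r) - 1) = Nat.gcd (2 ^ a - 1) (2 ^ r - 1) := by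
  have hA : 1 ≤ 2 ^ a := Nat.one_le_two_pow
  have hR : 1 ≤ 2 ^ r := Nat.one_le_two_pow
  have hB : 2 ^ (a + r) = 2 ^ a * 2 ^ r := pow_add 2 a r
  have h2 : 2 ^ r ≤ 2 ^ a * 2 ^ r := Nat.le_mul_of_pos_left _ (by positivity)
  have h1 : 2 ^ r * (2 ^ a - 1) = 2 ^ a * 2 ^ r - 2 ^ r := by zify [hA, h2]; ring
  have key : 2 ^ (a + r) - 1 = (2 ^ r - 1) + 2 ^ r * (2 ^ a - 1) := by omega
  rw [key, Nat.gcd_add_mul_right_right]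

private lemma mersenne_gcd (a b : ℕ) :
    Nat.gcd (2 ^ a - 1) (2 ^ b - 1) = 2 ^ Nat.gcd a b - 1 := by
  suffices H : ∀ s, ∀ a b : ℕ, a + b ≤ s →
      Nat.gcd (2 ^ a - 1) (2 ^ b - 1) = 2 ^ Nat.gcd a b - 1 from H (a + b) a b le_rfl
  intro s
  induction s with
  | zero =>
    intro a b h
    have ha : a = 0 := by omega
    have hb : b = 0 := by omega
    subst ha; subst hb; simp
  | succ s ih =>
    intro a b h
    rcases Nat.eq_zero_or_pos a with ha | ha
    · subst ha; simp
    rcases Nat.eq_zero_or_pos b with hb | hb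
    · subst hb; simp
    rcases le_total a b with hab | hab
    · obtain ⟨r, rfl⟩ := Nat.exists_eq_add_of_le hab
      rw [mersenne_step, ih a r (by omega), Nat.gcd_self_add_right a r]
    · obtain ⟨r, rfl⟩ := Nat.exists_eq_add_of_le hab
      rw [Nat.gcd_comm, mersenne_step, Nat.gcd_comm, ih r b (by omega),
        Nat.gcd_comm (b + r) b, Nat.gcd_self_add_right b r, Nat.gcd_comm b r]

private lemma card_pow_eq_one_eq_gcd (G : Type*) [CommGroup G] [Fintype G] [DecidableEq G]
    [IsCyclic G] (m : ℕ) (hm : 0 < m) :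
    (Finset.univ.filter fun x : G => x ^ m = 1).card = Nat.gcd m (Fintype.card G) := by
  set N := Fintype.card G with hN
  have hN0 : 0 < N := Fintype.card_pos
  set d := Nat.gcd m N with hd
  have hdN : d ∣ N := Nat.gcd_dvd_right m N
  have hd0 : 0 < d := Nat.gcd_pos_of_pos_left N hm
  have hfe : (Finset.univ.filter fun x : G => x ^ m = 1)
      = (Finset.univ.filter fun x : G => x ^ d = 1) := by
    ext x
    simp only [Finset.mem_filter, Finset.mem_univ, true_and]
    rw [← orderOf_dvd_iff_pow_eq_one, ← orderOf_dvd_iff_pow_eq_one]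
    constructor
    · intro h; exact Nat.dvd_gcd h orderOf_dvd_card
    · intro h; exact h.trans (Nat.gcd_dvd_left m N)
  rw [hfe]
  apply le_antisymm
  · exact IsCyclic.card_pow_eq_one_le hd0
  · obtain ⟨g, hg⟩ := IsCyclic.exists_ofOrder_eq_natCard (α := G)
    rw [Nat.card_eq_fintype_card] at hg
    set h := g ^ (N / d) with hh
    have horder : orderOf h = d := by
      rw [hh, orderOf_pow, hg, Nat.gcd_eq_right (Nat.div_dvd_of_dvd hdN),
        Nat.div_div_self hdN hN0.ne']
    have hd1 : h ^ d = 1 := by rw [← horder]; exact pow_orderOf_eq_one h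
    calc d = (Finset.image (h ^ ·) (Finset.range d)).card := by
          rw [Finset.card_image_of_injOn, Finset.card_range]
          intro i hi j hj hij
          exact pow_injOn_Iio_orderOf (by simpa [horder] using hi)
            (by simpa [horder] using hj) hij
    _ ≤ _ := by
        apply Finset.card_le_card
        intro x hx
        simp only [Finset.mem_image, Finset.mem_range] at hx
        obtain ⟨j, _, rfl⟩ := hx
        simp only [Finset.mem_filter, Finset.mem_univ, true_and]
        rw [pow_right_comm, hd1, one_pow]

/-- If `n/e` is even (`e = gcd(k,n)`) and `u` is a nonzero `(2^e+1)`-th power in the field `F`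
with `2^n` elements, then `L_u(x) = u^{2^k} x^{2^{2k}} + u x` has exactly `2^{2e}` roots. -/
theorem card_roots_linearized_even_pow (n k e : ℕ) (hk1 : 1 ≤ k) (hkn : k < n)
    (he : e = Nat.gcd k n)
    {F : Type*} [Field F] [Fintype F] [DecidableEq F] [CharP F 2]
    (hcard : Fintype.card F = 2 ^ n)
    (heven : Even (n / e))
    (u : F) (hu : u ≠ 0)
    (hpow : ∃ w : F, w ≠ 0 ∧ w ^ (2 ^ e + 1) = u) :
    (Finset.univ.filter fun x : F =>
        u ^ (2 ^ k) * x ^ (2 ^ (2 * k)) + u * x = 0).card = 2 ^ (2 * e) := by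
  obtain ⟨w, hw0, hwu⟩ := hpow
  have he1 : 0 < e := by rw [he]; exact Nat.gcd_pos_of_pos_left n hk1
  have hek : e ∣ k := he ▸ Nat.gcd_dvd_left k n
  have hen : e ∣ n := he ▸ Nat.gcd_dvd_right k n
  have h2en : 2 * e ∣ n := by
    obtain ⟨t, ht⟩ := heven
    obtain ⟨c, hc⟩ := hen
    have hc' : n / e = c := by rw [hc]; exact Nat.mul_div_cancel_left c he1
    rw [hc'] at ht
    exact ⟨t, by rw [hc, ht]; ring⟩
  have hgcd2 : Nat.gcd (2 * k) n = 2 * e := by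
    apply Nat.dvd_antisymm
    · have h1 : Nat.gcd (2 * k) n ∣ Nat.gcd (2 * k) (2 * n) :=
        Nat.dvd_gcd (Nat.gcd_dvd_left _ _) ((Nat.gcd_dvd_right _ _).trans (dvd_mul_left n 2))
      rwa [Nat.gcd_mul_left, ← he] at h1
    · exact Nat.dvd_gcd (mul_dvd_mul_left 2 hek) h2en
  set N := 2 ^ n - 1 with hNdef
  set m := 2 ^ (2 * k) - 1 with hmdef
  set g := 2 ^ (2 * e) - 1 with hgdef
  have h2k1 : 1 ≤ 2 ^ k := Nat.one_le_two_pow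
  have hm1 : m + 1 = 2 ^ (2 * k) :=
    Nat.succ_pred_eq_of_pos Nat.one_le_two_pow
  have hm0 : 0 < m := by
    have h4 : 2 ^ 2 ≤ 2 ^ (2 * k) := Nat.pow_le_pow_right (by norm_num) (by omega)
    omega
  have hgcdmN : Nat.gcd m N = g := by
    rw [hmdef, hNdef, mersenne_gcd, hgcd2]
  set s := (2 ^ e + 1) * (2 ^ k - 1) with hs
  have hgs : g ∣ s := by
    have hfac : g = (2 ^ e + 1) * (2 ^ e - 1) := by
      rw [hgdef, two_mul e, pow_add, mul_self_tsub_one]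
    rw [hfac, hs]
    apply mul_dvd_mul_left
    obtain ⟨t, ht⟩ := hek
    rw [ht, pow_mul]
    simpa using Nat.sub_dvd_pow_sub_pow (2 ^ e) 1 t
  have hNcard : Fintype.card Fˣ = N := by rw [Fintype.card_units, hcard]
  -- units setup
  set w₀ : Fˣ := Units.mk0 w hw0 with hw₀
  set u₀ : Fˣ := w₀ ^ (2 ^ e + 1) with hu₀
  have hu₀val : (u₀ : F) = u := by
    rw [hu₀, Units.val_pow_eq_pow_val, hw₀, Units.val_mk0, hwu]
  set c₀ : Fˣ := u₀ * (u₀ ^ (2 ^ k))⁻¹ with hc₀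
  have hexp : (2 ^ e + 1) + s = (2 ^ e + 1) * 2 ^ k := by
    rw [hs]; zify [h2k1]; ring
  have hws : w₀ ^ s = c₀⁻¹ := by
    rw [hc₀, hu₀, ← pow_mul, mul_inv, inv_inv]
    rw [← hexp, pow_add]
    group
  have hzg : ((w₀ ^ (s / g))⁻¹) ^ g = c₀ := by
    rw [inv_pow, ← pow_mul, Nat.div_mul_cancel hgs, hws, inv_inv]
  set z : Fˣ := (w₀ ^ (s / g))⁻¹ with hz
  have hzN : z ^ N = 1 := by rw [← hNcard]; exact pow_card_eq_one
  set y₀ : Fˣ := z ^ (Nat.gcdA m N) with hy₀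
  have hy : y₀ ^ m = c₀ := by
    have hBez : (g : ℤ) = m * Nat.gcdA m N + N * Nat.gcdB m N := by
      rw [← hgcdmN]; exact Nat.gcd_eq_gcd_ab m N
    have h1 : Nat.gcdA m N * (m : ℤ) = (g : ℤ) - N * Nat.gcdB m N := by
      linear_combination -hBez
    rw [hy₀, ← zpow_natCast (z ^ Nat.gcdA m N) m, ← zpow_mul, h1, zpow_sub, zpow_natCast,
      hzg, zpow_mul, zpow_natCast, hzN, one_zpow, inv_one, mul_one]
  set c : F := (c₀ : F) with hcF
  have hcne : c ≠ 0 := Units.ne_zero c₀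
  have hcval : c = u * (u ^ 2 ^ k)⁻¹ := by
    rw [hcF, hc₀, Units.val_mul, ← hu₀val]
    congr 1
    rw [← Units.val_pow_eq_pow_val]
    exact (Units.val_inv_eq_inv_val _)
  have hu2 : (u ^ 2 ^ k) ≠ 0 := pow_ne_zero _ hu
  have hyval : ((y₀ : F)) ^ m = c := by
    rw [← Units.val_pow_eq_pow_val, hy]
  -- equation characterization
  have hPiff : ∀ x : F,
      (u ^ 2 ^ k * x ^ 2 ^ (2 * k) + u * x = 0) ↔ (x = 0 ∨ x ^ m = c) := by
    intro x
    rw [add_eq_zero_iff_eq_neg, CharTwo.neg_eq]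
    constructor
    · intro hx
      rcases eq_or_ne x 0 with h0 | h0
      · exact Or.inl h0
      · right
        rw [← hm1, pow_succ, ← mul_assoc] at hx
        have hc1 : u ^ 2 ^ k * x ^ m = u := mul_right_cancel₀ h0 hx
        rw [hcval, eq_mul_inv_iff_mul_eq₀ hu2, mul_comm]
        exact hc1
    · rintro (rfl | hx)
      · rw [zero_pow (by positivity), mul_zero, mul_zero]
      · rw [← hm1, pow_succ, ← mul_assoc, hx, hcval]
        field_simp
  have hSeq : (Finset.univ.filter fun x : F =>
        u ^ (2 ^ k) * x ^ (2 ^ (2 * k)) + u * x = 0)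
      = insert (0 : F) (Finset.univ.filter fun x : F => x ^ m = c) := by
    ext x
    simp only [Finset.mem_filter, Finset.mem_univ, true_and, Finset.mem_insert]
    exact hPiff x
  have h0nT : (0 : F) ∉ (Finset.univ.filter fun x : F => x ^ m = c) := by
    simp only [Finset.mem_filter, Finset.mem_univ, true_and]
    rw [zero_pow hm0.ne']
    exact fun h => hcne h.symm
  have hTeq : (Finset.univ.filter fun x : F => x ^ m = c)
      = Finset.image (fun x => (y₀ : F) * x)
          (Finset.univ.filter fun x : F => x ^ m = 1) := by
    ext zz
    simp only [Finset.mem_image, Finset.mem_filter, Finset.mem_univ, true_and]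
    constructor
    · intro hzz
      refine ⟨((y₀⁻¹ : Fˣ) : F) * zz, ?_, ?_⟩
      · rw [mul_pow, hzz, Units.val_inv_eq_inv_val, inv_pow, hyval,
          inv_mul_cancel₀ hcne]
      · rw [← mul_assoc, Units.val_inv_eq_inv_val,
          mul_inv_cancel₀ (Units.ne_zero y₀), one_mul]
    · rintro ⟨x, hx1, rfl⟩
      rw [mul_pow, hx1, mul_one, hyval]
  have hRcard : (Finset.univ.filter fun x : F => x ^ m = 1).card
      = (Finset.univ.filter fun x : Fˣ => x ^ m = 1).card := by
    symm
    apply Finset.card_bij (fun (x : Fˣ) _ => (x : F))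
    · intro a ha
      simp only [Finset.mem_filter, Finset.mem_univ, true_and] at ha ⊢
      rw [← Units.val_pow_eq_pow_val, ha, Units.val_one]
    · intro a _ b _ hab
      exact Units.ext hab
    · intro b hb
      simp only [Finset.mem_filter, Finset.mem_univ, true_and] at hb
      have hb0 : b ≠ 0 := by
        intro h; rw [h, zero_pow hm0.ne'] at hb; exact one_ne_zero hb.symm
      refine ⟨Units.mk0 b hb0, ?_, rfl⟩
      simp only [Finset.mem_filter, Finset.mem_univ, true_and]
      ext
      rw [Units.val_pow_eq_pow_val, Units.val_mk0, hb, Units.val_one]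
  have hUcard : (Finset.univ.filter fun x : Fˣ => x ^ m = 1).card = g := by
    rw [card_pow_eq_one_eq_gcd Fˣ m hm0, hNcard, hgcdmN]
  rw [hSeq, Finset.card_insert_of_notMem h0nT, hTeq,
    Finset.card_image_of_injective _ (mul_right_injective₀ (Units.ne_zero y₀)),
    hRcard, hUcard]
  have hg1 : 1 ≤ 2 ^ (2 * e) := Nat.one_le_two_pow
  rw [hgdef]
  omega
end

section
/- Let n, k be positive integers with 1 ≤ k < n and e = gcd(k, n), and suppose n/e is even, so n = 2m with e dividing m. Let u, v ∈ F_q^* and suppose u is not a (2^e+1)-th power of any element of F_q^*. Then the map L_u(x) = u^{2^k}·x^{2^{2k}} + u·x is a bijection of F_q, and for the unique x_u ∈ F_q with L_u(x_u) = v^{2^k} one has S(u, v) = (−1)^{m/e}·2^m·χ1(u·x_u^{2^k+1}). -/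
/-- The absolute trace map `Tr : F → F_2`, viewed inside `F` (its values lie in `{0,1}`),
for a field `F` with `2^n` elements. -/
def absTr (n : ℕ) {F : Type*} [Field F] (x : F) : F :=
  ∑ i ∈ Finset.range n, x ^ (2 ^ i)

/-- The canonical additive character `χ1(x) = (−1)^{Tr(x)} ∈ ℤ`. -/
def chi (n : ℕ) {F : Type*} [Field F] [DecidableEq F] (x : F) : ℤ :=
  if absTr n x = 0 then 1 else -1

set_option linter.unusedSectionVars false
set_option linter.unusedVariables false
set_option maxHeartbeats 1000000

section A
variable (n : ℕ) {F : Type*} [Field F] [Fintype F] [DecidableEq F] [CharP F 2]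

omit [Fintype F] [DecidableEq F] in
lemma absTr_add (x y : F) : absTr n (x + y) = absTr n x + absTr n y := by
  unfold absTr
  rw [← Finset.sum_add_distrib]
  exact Finset.sum_congr rfl fun i _ => add_pow_char_pow ..

omit [Fintype F] [DecidableEq F] [CharP F 2] in
lemma absTr_zero : absTr n (0 : F) = 0 := by
  unfold absTr
  exact Finset.sum_eq_zero fun i _ => zero_pow (pow_ne_zero i two_ne_zero)

omit [DecidableEq F] [CharP F 2] in
lemma pow_card_fix (hcard : Fintype.card F = 2 ^ n) (x : F) : x ^ 2 ^ n = x := by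
  rw [← hcard]; exact FiniteField.pow_card x

omit [DecidableEq F] in
lemma absTr_sq (hcard : Fintype.card F = 2 ^ n) (x : F) : absTr n (x ^ 2) = absTr n x := by
  unfold absTr
  have h1 : ∀ i : ℕ, (x ^ 2) ^ 2 ^ i = x ^ 2 ^ (i + 1) := by
    intro i; rw [← pow_mul, pow_succ, mul_comm (2 ^ i) 2, pow_mul]
  rw [Finset.sum_congr rfl fun i _ => h1 i]
  have key : (∑ i ∈ Finset.range n, x ^ 2 ^ (i + 1)) + x ^ 2 ^ 0 =
      (∑ i ∈ Finset.range n, x ^ 2 ^ i) + x ^ 2 ^ n := by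
    exact (Finset.sum_range_succ' (fun i => x ^ 2 ^ i) n).symm.trans
      (Finset.sum_range_succ (fun i => x ^ 2 ^ i) n)
  have hx : x ^ 2 ^ n = x := pow_card_fix n hcard x
  rw [hx] at key
  simp only [pow_zero, pow_one] at key
  exact add_right_cancel key

omit [DecidableEq F] in
lemma absTr_frob (hcard : Fintype.card F = 2 ^ n) (j : ℕ) (x : F) :
    absTr n (x ^ 2 ^ j) = absTr n x := by
  induction j with
  | zero => simp
  | succ i ih =>
    have : x ^ 2 ^ (i + 1) = (x ^ 2 ^ i) ^ 2 := by rw [← pow_mul, pow_succ]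
    rw [this, absTr_sq n hcard, ih]

omit [DecidableEq F] in
lemma absTr_eq_zero_or_one (hcard : Fintype.card F = 2 ^ n) (x : F) :
    absTr n x = 0 ∨ absTr n x = 1 := by
  have h : absTr n x ^ 2 = absTr n x := by
    unfold absTr
    rw [sum_pow_char]
    have h2 := absTr_sq n hcard x
    unfold absTr at h2
    rw [← h2]
    refine Finset.sum_congr rfl fun i _ => ?_
    rw [← pow_mul, ← pow_mul, mul_comm]
  have h2 : absTr n x * (absTr n x - 1) = 0 := by
    rw [mul_sub, mul_one, ← sq, h, sub_self]
  rcases mul_eq_zero.mp h2 with h3 | h3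
  · exact Or.inl h3
  · exact Or.inr (sub_eq_zero.mp h3)

end A

section B
variable (n : ℕ) {F : Type*} [Field F] [Fintype F] [DecidableEq F] [CharP F 2]

lemma chi_zero : chi n (0 : F) = 1 := by
  unfold chi; rw [if_pos (absTr_zero n)]

lemma chi_eq (x y : F) (h : absTr n x = absTr n y) : chi n x = chi n y := by
  unfold chi; rw [h]

lemma chi_add (hcard : Fintype.card F = 2 ^ n) (x y : F) :
    chi n (x + y) = chi n x * chi n y := by
  unfold chi
  rw [absTr_add n x y]
  rcases absTr_eq_zero_or_one n hcard x with h1 | h1 <;>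
    rcases absTr_eq_zero_or_one n hcard y with h2 | h2 <;>
    rw [h1, h2] <;> simp [CharTwo.add_self_eq_zero, one_ne_zero]

lemma exists_absTr_ne (hn : 1 ≤ n) (hcard : Fintype.card F = 2 ^ n) :
    ∃ b : F, absTr n b ≠ 0 := by
  by_contra hall
  push_neg at hall
  set P : Polynomial F := ∑ i ∈ Finset.range n, Polynomial.X ^ (2 ^ i) with hP
  have heval : ∀ x : F, P.eval x = 0 := by
    intro x
    have : P.eval x = absTr n x := by
      rw [hP, Polynomial.eval_finset_sum]
      simp [absTr]
    rw [this, hall]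
  have hdeg : P.natDegree < Fintype.card F := by
    have h1 : P.natDegree ≤ 2 ^ (n - 1) := by
      refine (Polynomial.natDegree_sum_le _ _).trans ?_
      simp only [Finset.fold_max_le]
      constructor
      · positivity
      intro i hi
      simp only [Function.comp_apply, Polynomial.natDegree_X_pow]
      exact Nat.pow_le_pow_right (by norm_num) (Nat.le_sub_one_of_lt (Finset.mem_range.mp hi))
    calc P.natDegree ≤ 2 ^ (n - 1) := h1
      _ < 2 ^ n := Nat.pow_lt_pow_right (by norm_num) (by omega)
      _ = Fintype.card F := hcard.symm
  have hP0 : P = 0 :=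
    Polynomial.eq_zero_of_natDegree_lt_card_of_eval_eq_zero P Function.injective_id
      (fun i => heval i) hdeg
  have : P.coeff 1 = 1 := by
    rw [hP, Polynomial.finset_sum_coeff]
    rw [Finset.sum_eq_single 0]
    · simp
    · intro i hi hne
      rw [Polynomial.coeff_X_pow]
      have : 2 ^ i ≠ 1 := by
        have : 1 < 2 ^ i := Nat.one_lt_two_pow hne
        omega
      have h1 : ¬ (1 = 2 ^ i) := fun h => this h.symm
      simp [h1]
    · intro h; exact absurd (Finset.mem_range.mpr (by omega)) h
  rw [hP0] at this
  simp at this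

lemma sum_chi_mul (hn : 1 ≤ n) (hcard : Fintype.card F = 2 ^ n) (c : F) (hc : c ≠ 0) :
    ∑ x : F, chi n (c * x) = 0 := by
  obtain ⟨b, hb⟩ := exists_absTr_ne n hn hcard
  have key : ∑ x : F, chi n (c * x) = ∑ x : F, chi n (c * x + b) := by
    refine Fintype.sum_bijective (fun x => x + c⁻¹ * b)
      (Equiv.addRight (c⁻¹ * b)).bijective _ _ ?_
    intro x
    rw [mul_add, ← mul_assoc, mul_inv_cancel₀ hc, one_mul, add_assoc,
      CharTwo.add_self_eq_zero, add_zero]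
  have hb1 : chi n b = -1 := by unfold chi; rw [if_neg hb]
  have : ∀ x : F, chi n (c * x + b) = - chi n (c * x) := by
    intro x; rw [chi_add n hcard, hb1]; ring
  rw [Finset.sum_congr rfl fun x _ => this x] at key
  rw [Finset.sum_neg_distrib] at key
  omega

lemma sum_chi_mul_if (hn : 1 ≤ n) (hcard : Fintype.card F = 2 ^ n) (c : F) :
    ∑ x : F, chi n (c * x) = if c = 0 then (2 ^ n : ℤ) else 0 := by
  by_cases hc : c = 0
  · rw [if_pos hc, hc]
    simp only [zero_mul, chi_zero]
    simp [Finset.card_univ, hcard]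
  · rw [if_neg hc, sum_chi_mul n hn hcard c hc]

end B

section C

lemma two_pow_sub_one_dvd {a b : ℕ} (h : a ∣ b) : 2 ^ a - 1 ∣ 2 ^ b - 1 := by
  obtain ⟨c, rfl⟩ := h
  simpa [← pow_mul] using Nat.sub_dvd_pow_sub_pow (2 ^ a) 1 c

lemma dvd_two_pow_add_one {e k : ℕ} (hek : e ∣ k) (hko : Odd (k / e)) :
    (2 ^ e + 1) ∣ (2 ^ k + 1) := by
  have hk : k = e * (k / e) := (Nat.mul_div_cancel' hek).symm
  have h : ((2:ℤ) ^ e - (-1)) ∣ ((2 ^ e) ^ (k / e) - (-1) ^ (k / e)) :=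
    sub_dvd_pow_sub_pow _ _ _
  rw [hko.neg_one_pow, ← pow_mul, ← hk] at h
  have h2 : ((2:ℤ) ^ e + 1) ∣ (2 ^ k + 1) := by simpa [sub_neg_eq_add] using h
  exact_mod_cast h2

lemma two_pow_mul_sub_one {e : ℕ} : (2 ^ e + 1) * (2 ^ e - 1) = 2 ^ (2 * e) - 1 := by
  have h1 : 1 ≤ (2:ℕ) ^ e := Nat.one_le_two_pow
  have h2 : 1 ≤ (2:ℕ) ^ (2 * e) := Nat.one_le_two_pow
  zify [h1, h2]
  ring

lemma coprime_pow_add_sub {e k : ℕ} (hek : e ∣ k) (hko : Odd (k / e)) :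
    Nat.Coprime (2 ^ e + 1) (2 ^ k - 1) := by
  set d := Nat.gcd (2 ^ e + 1) (2 ^ k - 1) with hd
  have hd1 : d ∣ 2 ^ e + 1 := Nat.gcd_dvd_left _ _
  have hd2 : d ∣ 2 ^ k - 1 := Nat.gcd_dvd_right _ _
  have hdpos : 0 < d := Nat.gcd_pos_of_pos_left _ (by positivity)
  haveI : NeZero d := ⟨hdpos.ne'⟩
  have h1 : ((2:ZMod d)) ^ e = -1 := by
    have := (ZMod.natCast_eq_zero_iff (2 ^ e + 1) d).mpr hd1
    push_cast at this
    linear_combination this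
  have h2 : ((2:ZMod d)) ^ k = 1 := by
    have := (ZMod.natCast_eq_zero_iff (2 ^ k - 1) d).mpr hd2
    have hle : 1 ≤ 2 ^ k := Nat.one_le_two_pow
    rw [Nat.cast_sub hle] at this
    push_cast at this
    linear_combination this
  have hk : k = e * (k / e) := (Nat.mul_div_cancel' hek).symm
  have h3 : (1 : ZMod d) = -1 := by
    calc (1 : ZMod d) = (2 : ZMod d) ^ k := h2.symm
      _ = ((2 : ZMod d) ^ e) ^ (k / e) := by rw [← pow_mul, ← hk]
      _ = (-1 : ZMod d) ^ (k / e) := by rw [h1]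
      _ = -1 := hko.neg_one_pow
  have h4 : ((2 : ℕ) : ZMod d) = 0 := by push_cast; linear_combination h3
  have h5 : d ∣ 2 := (ZMod.natCast_eq_zero_iff 2 d).mp h4
  have hk1 : k ≠ 0 := by
    rintro rfl
    simp [Nat.zero_div] at hko
  have hodd : ¬ (2 ∣ d) := by
    intro h2d
    have hdvd : (2:ℕ) ∣ 2 ^ k - 1 := dvd_trans h2d hd2
    have hle : 1 ≤ 2 ^ k := Nat.one_le_two_pow
    have h2k : (2:ℕ) ∣ 2 ^ k := dvd_pow_self 2 hk1
    omega
  have hd2' : d ≤ 2 := Nat.le_of_dvd two_pos h5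
  have hdne : d ≠ 2 := fun h => hodd (by rw [h])
  have : d = 1 := by omega
  exact this

lemma kernel_power {e k a : ℕ} (hek : e ∣ k) (hko : Odd (k / e))
    (h : (2 ^ (2 * e) - 1) ∣ a * (2 ^ k - 1)) : (2 ^ e + 1) ∣ a := by
  have h1 : (2 ^ e + 1) ∣ (2 ^ (2 * e) - 1) := ⟨2 ^ e - 1, two_pow_mul_sub_one.symm⟩
  exact (coprime_pow_add_sub hek hko).dvd_of_dvd_mul_right (h1.trans h)

end C
section D
variable {F : Type*} [Field F] [Fintype F] [DecidableEq F] [CharP F 2]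

/-- kernel of `L_u` is trivial when `u` is not a `(2^e+1)`-th power -/
lemma ker_trivial (n k e : ℕ) (hkn : k ≤ n) (he1 : 1 ≤ e)
    (hek : e ∣ k) (h2en : 2 * e ∣ n) (hko : Odd (k / e))
    (hcard : Fintype.card F = 2 ^ n)
    {u : F} (hu : u ≠ 0) (hpow : ¬ ∃ w : F, w ≠ 0 ∧ w ^ (2 ^ e + 1) = u)
    {w : F} (hL : u ^ (2 ^ k) * w ^ (2 ^ (2 * k)) + u * w = 0) : w = 0 := by
  by_contra hw
  have heq : u ^ (2 ^ k) * w ^ (2 ^ (2 * k)) = u * w := by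
    rw [add_eq_zero_iff_eq_neg, CharTwo.neg_eq] at hL
    exact hL
  set U : Fˣ := Units.mk0 u hu with hU
  set W : Fˣ := Units.mk0 w hw with hW
  have heqU : U ^ (2 ^ k) * W ^ (2 ^ (2 * k)) = U * W := by
    apply Units.ext
    simpa [hU, hW] using heq
  obtain ⟨g, hg⟩ := IsCyclic.exists_generator (α := Fˣ)
  obtain ⟨a, ha⟩ := (Submonoid.mem_powers_iff U g).mp
    (mem_powers_iff_mem_zpowers.mpr (hg U))
  obtain ⟨b, hb⟩ := (Submonoid.mem_powers_iff W g).mp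
    (mem_powers_iff_mem_zpowers.mpr (hg W))
  have hord : orderOf g = 2 ^ n - 1 := by
    rw [orderOf_eq_card_of_forall_mem_zpowers hg, Nat.card_eq_fintype_card,
      Fintype.card_units, hcard]
  have hgeq : g ^ (a * 2 ^ k + b * 2 ^ (2 * k)) = g ^ (a + b) := by
    rw [pow_add, pow_mul, pow_mul, ha, hb]
    rw [pow_add, ha, hb]
    exact heqU
  have hmodN : a * 2 ^ k + b * 2 ^ (2 * k) ≡ a + b [MOD 2 ^ n - 1] := by
    rw [← hord]; exact (pow_eq_pow_iff_modEq.mp hgeq)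
  -- reduce mod M = 2^(2e)-1
  set M := 2 ^ (2 * e) - 1 with hM
  have hMN : M ∣ 2 ^ n - 1 := two_pow_sub_one_dvd h2en
  have hmodM : a * 2 ^ k + b * 2 ^ (2 * k) ≡ a + b [MOD M] := hmodN.of_dvd hMN
  have hMpos : 3 ≤ M := by
    have : (4:ℕ) ≤ 2 ^ (2 * e) := by
      calc (4:ℕ) = 2 ^ 2 := by norm_num
        _ ≤ 2 ^ (2 * e) := Nat.pow_le_pow_right (by norm_num) (by omega)
    omega
  haveI : NeZero M := ⟨by omega⟩
  have hcast : ((a * 2 ^ k + b * 2 ^ (2 * k) : ℕ) : ZMod M) = ((a + b : ℕ) : ZMod M) :=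
    (ZMod.natCast_eq_natCast_iff _ _ _).mpr hmodM
  have h2k2 : ((2 : ZMod M)) ^ (2 * k) = 1 := by
    have hdvd : M ∣ 2 ^ (2 * k) - 1 := two_pow_sub_one_dvd (mul_dvd_mul_left 2 hek)
    have := (ZMod.natCast_eq_zero_iff (2 ^ (2 * k) - 1) M).mpr hdvd
    rw [Nat.cast_sub Nat.one_le_two_pow] at this
    push_cast at this
    linear_combination this
  have hkey : ((a * (2 ^ k - 1) : ℕ) : ZMod M) = 0 := by
    have hle : 1 ≤ 2 ^ k := Nat.one_le_two_pow
    rw [Nat.cast_mul, Nat.cast_sub hle]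
    push_cast
    push_cast at hcast
    rw [h2k2] at hcast
    linear_combination hcast
  have hdvd2 : M ∣ a * (2 ^ k - 1) :=
    (ZMod.natCast_eq_zero_iff _ M).mp hkey
  have hdvda : (2 ^ e + 1) ∣ a := kernel_power hek hko (hM ▸ hdvd2)
  obtain ⟨a', ha'⟩ := hdvda
  refine hpow ⟨((g ^ a' : Fˣ) : F), Units.ne_zero _, ?_⟩
  have : (g ^ a') ^ (2 ^ e + 1) = U := by
    rw [← pow_mul, mul_comm a' (2 ^ e + 1), ← ha', ha]
  calc ((g ^ a' : Fˣ) : F) ^ (2 ^ e + 1) = (((g ^ a') ^ (2 ^ e + 1) : Fˣ) : F) := by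
        push_cast; ring
    _ = u := by rw [this]; rfl

end D
section E
variable (n k : ℕ) {F : Type*} [Field F] [Fintype F] [DecidableEq F] [CharP F 2]

lemma chi_bilinear_term (hcard : Fintype.card F = 2 ^ n) (hkn : k ≤ n) (A B x : F) :
    chi n (A * x ^ (2 ^ k) + B * x) = chi n ((A ^ (2 ^ (n - k)) + B) * x) := by
  apply chi_eq
  rw [absTr_add, add_mul, absTr_add]
  congr 1
  rw [← absTr_frob n hcard (n - k) (A * x ^ 2 ^ k)]
  congr 1
  rw [mul_pow, ← pow_mul, ← pow_add]
  have h1 : k + (n - k) = n := by omega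
  rw [h1, pow_card_fix n hcard]

lemma sum_chi_bilinear (hn : 1 ≤ n) (hcard : Fintype.card F = 2 ^ n) (hkn : k ≤ n) (A B : F) :
    ∑ x : F, chi n (A * x ^ (2 ^ k) + B * x) =
      if A ^ (2 ^ (n - k)) + B = 0 then (2 ^ n : ℤ) else 0 := by
  rw [Finset.sum_congr rfl fun x _ => chi_bilinear_term n k hcard hkn A B x]
  exact sum_chi_mul_if n hn hcard _

lemma L_inj (u : F)
    (hker : ∀ w : F, u ^ (2 ^ k) * w ^ (2 ^ (2 * k)) + u * w = 0 → w = 0) :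
    Function.Bijective (fun x : F => u ^ (2 ^ k) * x ^ (2 ^ (2 * k)) + u * x) := by
  have hinj : Function.Injective (fun x : F => u ^ (2 ^ k) * x ^ (2 ^ (2 * k)) + u * x) := by
    intro x y hxy
    simp only at hxy
    have h0 : u ^ (2 ^ k) * (x + y) ^ (2 ^ (2 * k)) + u * (x + y) = 0 := by
      rw [add_pow_char_pow]
      rw [show u ^ 2 ^ k * (x ^ 2 ^ (2 * k) + y ^ 2 ^ (2 * k)) + u * (x + y)
        = (u ^ 2 ^ k * x ^ 2 ^ (2 * k) + u * x) + (u ^ 2 ^ k * y ^ 2 ^ (2 * k) + u * y) by ring]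
      rw [hxy, CharTwo.add_self_eq_zero]
    have hxy0 := hker _ h0
    rw [add_eq_zero_iff_eq_neg, CharTwo.neg_eq] at hxy0
    exact hxy0
  exact Finite.injective_iff_bijective.mp hinj

lemma id1 (u x w : F) : u * x ^ (2 ^ k + 1) + u * (x + w) ^ (2 ^ k + 1)
    = u * w ^ (2 ^ k + 1) + ((u * w) * x ^ (2 ^ k) + (u * w ^ (2 ^ k)) * x) := by
  have h2 : (2 : F) = 0 := CharTwo.two_eq_zero
  have hxw : (x + w) ^ (2 ^ k : ℕ) = x ^ (2 ^ k : ℕ) + w ^ (2 ^ k : ℕ) := add_pow_char_pow ..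
  rw [pow_succ, pow_succ, pow_succ, hxw]
  linear_combination (u * x ^ (2 ^ k : ℕ) * x) * h2

lemma S0_sq (hn : 1 ≤ n) (hcard : Fintype.card F = 2 ^ n) (hkn : k ≤ n) (u : F)
    (hker : ∀ w : F, u ^ (2 ^ k) * w ^ (2 ^ (2 * k)) + u * w = 0 → w = 0) :
    (∑ x : F, chi n (u * x ^ (2 ^ k + 1))) ^ 2 = 2 ^ n := by
  rw [sq, Finset.sum_mul_sum]
  have step1 : ∀ x : F,
      (∑ y : F, chi n (u * x ^ (2 ^ k + 1)) * chi n (u * y ^ (2 ^ k + 1)))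
      = ∑ w : F, chi n (u * w ^ (2 ^ k + 1) + ((u * w) * x ^ (2 ^ k) + (u * w ^ (2 ^ k)) * x)) := by
    intro x
    refine (Fintype.sum_bijective (fun w : F => x + w) (Equiv.addLeft x).bijective _ _ ?_).symm
    intro w
    show chi n (u * w ^ (2 ^ k + 1) + ((u * w) * x ^ (2 ^ k) + (u * w ^ (2 ^ k)) * x))
      = chi n (u * x ^ (2 ^ k + 1)) * chi n (u * (x + w) ^ (2 ^ k + 1))
    rw [← chi_add n hcard, ← id1 k u x w]
  rw [Finset.sum_congr rfl fun x _ => step1 x, Finset.sum_comm]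
  have hcond : ∀ w : F, ((u * w) ^ (2 ^ (n - k)) + u * w ^ (2 ^ k) = 0) ↔ w = 0 := by
    intro w
    constructor
    · intro h
      rw [add_eq_zero_iff_eq_neg, CharTwo.neg_eq] at h
      have h2 := congrArg (· ^ (2 ^ k : ℕ)) h
      rw [← pow_mul, ← pow_add] at h2
      rw [show n - k + k = n by omega, pow_card_fix n hcard] at h2
      rw [mul_pow, ← pow_mul, ← pow_add, show k + k = 2 * k by ring] at h2
      apply hker
      rw [← h2, CharTwo.add_self_eq_zero]
    · rintro rfl
      simp [zero_pow (pow_ne_zero _ (two_ne_zero))]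
  have step2 : ∀ w : F,
      (∑ x : F, chi n (u * w ^ (2 ^ k + 1) + ((u * w) * x ^ (2 ^ k) + (u * w ^ (2 ^ k)) * x)))
      = if w = 0 then chi n (u * w ^ (2 ^ k + 1)) * 2 ^ n else 0 := by
    intro w
    have : ∀ x : F, chi n (u * w ^ (2 ^ k + 1) + ((u * w) * x ^ (2 ^ k) + (u * w ^ (2 ^ k)) * x))
        = chi n (u * w ^ (2 ^ k + 1)) * chi n ((u * w) * x ^ (2 ^ k) + (u * w ^ (2 ^ k)) * x) := by
      intro x; rw [chi_add n hcard]
    rw [Finset.sum_congr rfl fun x _ => this x, ← Finset.mul_sum]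
    rw [sum_chi_bilinear n k hn hcard hkn]
    rw [if_congr (hcond w) rfl rfl]
    by_cases hw : w = 0
    · rw [if_pos hw, if_pos hw]
    · rw [if_neg hw, if_neg hw, mul_zero]
  rw [Finset.sum_congr rfl fun w _ => step2 w]
  rw [Finset.sum_ite_eq' Finset.univ (0 : F)
    (fun w => chi n (u * w ^ (2 ^ k + 1)) * 2 ^ n)]
  rw [if_pos (Finset.mem_univ 0)]
  rw [zero_pow (by positivity), mul_zero, chi_zero, one_mul]

end E
section Fsec
variable (n k : ℕ) {F : Type*} [Field F] [Fintype F] [DecidableEq F] [CharP F 2]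

lemma pow_pow_card (hcard : Fintype.card F = 2 ^ n) {i j : ℕ} (h : i + j = n) (y : F) :
    (y ^ (2 ^ i : ℕ)) ^ (2 ^ j : ℕ) = y := by
  rw [← pow_mul, ← pow_add, h, pow_card_fix n hcard]

lemma chi_of_absTr_zero {x : F} (h : absTr n x = 0) : chi n x = 1 := by
  unfold chi; rw [if_pos h]

lemma S_shift (hn : 1 ≤ n) (hcard : Fintype.card F = 2 ^ n) (hkn : k ≤ n) (u v xu : F)
    (hL : u ^ (2 ^ k) * xu ^ (2 ^ (2 * k)) + u * xu = v ^ (2 ^ k)) :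
    ∑ x : F, chi n (u * x ^ (2 ^ k + 1) + v * x)
      = chi n (u * xu ^ (2 ^ k + 1)) * ∑ x : F, chi n (u * x ^ (2 ^ k + 1)) := by
  have h2 : (2 : F) = 0 := CharTwo.two_eq_zero
  have hv' : u * xu ^ (2 ^ k) + (u * xu) ^ (2 ^ (n - k)) = v := by
    have h := congrArg (· ^ (2 ^ (n - k) : ℕ)) hL
    have e1 : (u ^ (2 ^ k : ℕ)) ^ (2 ^ (n - k) : ℕ) = u :=
      pow_pow_card n hcard (by omega) u
    have e2 : (xu ^ (2 ^ (2 * k) : ℕ)) ^ (2 ^ (n - k) : ℕ) = xu ^ (2 ^ k : ℕ) := by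
      rw [show (2 ^ (2 * k) : ℕ) = 2 ^ k * 2 ^ k by rw [← pow_add]; ring_nf]
      rw [pow_mul]
      exact pow_pow_card n hcard (by omega) (xu ^ (2 ^ k : ℕ))
    have e3 : (v ^ (2 ^ k : ℕ)) ^ (2 ^ (n - k) : ℕ) = v :=
      pow_pow_card n hcard (by omega) v
    rw [add_pow_char_pow, mul_pow, e1, e2, e3] at h
    exact h
  -- reindex x ↦ x + xu
  have step1 : ∑ x : F, chi n (u * x ^ (2 ^ k + 1) + v * x)
      = ∑ x : F, chi n (u * (x + xu) ^ (2 ^ k + 1) + v * (x + xu)) := by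
    refine (Fintype.sum_bijective (fun x : F => x + xu)
      (Equiv.addRight xu).bijective _ _ ?_).symm
    intro x
    rfl
  rw [step1]
  have id2 : ∀ x : F, u * (x + xu) ^ (2 ^ k + 1) + v * (x + xu)
      = (u * x ^ (2 ^ k + 1)) + (((u * xu) * x ^ (2 ^ k) + (u * xu ^ (2 ^ k) + v) * x)
        + (u * xu ^ (2 ^ k + 1) + v * xu)) := by
    intro x
    have hxw : (x + xu) ^ (2 ^ k : ℕ) = x ^ (2 ^ k : ℕ) + xu ^ (2 ^ k : ℕ) :=
      add_pow_char_pow ..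
    rw [pow_succ, pow_succ, pow_succ, hxw]
    ring
  have hmid : ∀ x : F, chi n ((u * xu) * x ^ (2 ^ k) + (u * xu ^ (2 ^ k) + v) * x) = 1 := by
    intro x
    rw [chi_bilinear_term n k hcard hkn]
    have hc : (u * xu) ^ (2 ^ (n - k)) + (u * xu ^ (2 ^ k) + v) = 0 := by
      linear_combination hv' + v * h2
    rw [hc, zero_mul, chi_zero]
  have hconst : chi n (u * xu ^ (2 ^ k + 1) + v * xu) = chi n (u * xu ^ (2 ^ k + 1)) := by
    rw [chi_add n hcard]
    have habs : absTr n (v * xu) = 0 := by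
      have hvxu : v * xu = u * xu ^ (2 ^ k) * xu + (u * xu) ^ (2 ^ (n - k)) * xu := by
        rw [← hv']; ring
      rw [hvxu, absTr_add]
      have hterm : absTr n ((u * xu) ^ (2 ^ (n - k)) * xu) = absTr n (u * xu ^ (2 ^ k) * xu) := by
        rw [← absTr_frob n hcard k ((u * xu) ^ (2 ^ (n - k)) * xu)]
        congr 1
        rw [mul_pow, pow_pow_card n hcard (by omega) (u * xu)]
        ring
      rw [hterm, CharTwo.add_self_eq_zero]
    rw [chi_of_absTr_zero n habs, mul_one]
  calc ∑ x : F, chi n (u * (x + xu) ^ (2 ^ k + 1) + v * (x + xu))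
      = ∑ x : F, chi n (u * x ^ (2 ^ k + 1))
          * (chi n ((u * xu) * x ^ (2 ^ k) + (u * xu ^ (2 ^ k) + v) * x)
            * chi n (u * xu ^ (2 ^ k + 1) + v * xu)) := by
        refine Finset.sum_congr rfl fun x _ => ?_
        rw [← chi_add n hcard, ← chi_add n hcard, ← id2 x]
    _ = ∑ x : F, chi n (u * x ^ (2 ^ k + 1)) * chi n (u * xu ^ (2 ^ k + 1)) := by
        refine Finset.sum_congr rfl fun x _ => ?_
        rw [hmid x, one_mul, hconst]
    _ = chi n (u * xu ^ (2 ^ k + 1)) * ∑ x : F, chi n (u * x ^ (2 ^ k + 1)) := by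
        rw [← Finset.sum_mul]; ring

end Fsec
section Gsec
variable (n : ℕ) {F : Type*} [Field F] [Fintype F] [DecidableEq F] [CharP F 2]

lemma fiber_card_dvd (s d : ℕ) (hn : 1 ≤ n) (hcard : Fintype.card F = 2 ^ n)
    (hds : d ∣ s) (hdN : d ∣ 2 ^ n - 1) (j : Fˣ) :
    d ∣ (Finset.filter (fun y : Fˣ => y ^ s = j) Finset.univ).card := by
  rcases (Finset.filter (fun y : Fˣ => y ^ s = j) Finset.univ).eq_empty_or_nonempty with h | h
  · rw [h]; simp
  obtain ⟨i0, hi0⟩ := h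
  have hi0' : i0 ^ s = j := (Finset.mem_filter.mp hi0).2
  -- the fiber has the same cardinality as the kernel
  have hbij : (Finset.filter (fun y : Fˣ => y ^ s = j) Finset.univ).card
      = (Finset.filter (fun y : Fˣ => y ^ s = 1) Finset.univ).card := by
    refine Finset.card_bij' (fun t _ => i0⁻¹ * t) (fun t _ => i0 * t) ?_ ?_ ?_ ?_
    · intro t ht
      rw [Finset.mem_filter] at ht ⊢
      refine ⟨Finset.mem_univ _, ?_⟩
      rw [mul_pow, inv_pow, hi0', ht.2, inv_mul_cancel]
    · intro t ht
      rw [Finset.mem_filter] at ht ⊢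
      refine ⟨Finset.mem_univ _, ?_⟩
      rw [mul_pow, hi0', ht.2, mul_one]
    · intro t _; simp
    · intro t _; simp
  rw [hbij]
  -- the kernel is a subgroup containing an element of order d
  set K : Subgroup Fˣ := MonoidHom.ker (powMonoidHom s) with hK
  have hcardK : (Finset.filter (fun y : Fˣ => y ^ s = 1) Finset.univ).card
      = Fintype.card K := by
    rw [Fintype.card_subtype]
    congr 1
    apply Finset.filter_congr
    intro y _
    simp [hK, MonoidHom.mem_ker, powMonoidHom_apply]
  rw [hcardK]
  -- generator
  obtain ⟨g0, hg0⟩ := IsCyclic.exists_generator (α := Fˣ)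
  have hord : orderOf g0 = 2 ^ n - 1 := by
    rw [orderOf_eq_card_of_forall_mem_zpowers hg0, Nat.card_eq_fintype_card,
      Fintype.card_units, hcard]
  have hNpos : 0 < 2 ^ n - 1 := by
    have : (2:ℕ) ≤ 2 ^ n := by calc (2:ℕ) = 2^1 := by norm_num
                                   _ ≤ 2 ^ n := Nat.pow_le_pow_right (by norm_num) hn
    omega
  have hdpos : 0 < d := Nat.pos_of_dvd_of_pos hdN hNpos
  set t := (2 ^ n - 1) / d with ht
  have htpos : 0 < t := Nat.div_pos (Nat.le_of_dvd hNpos hdN) hdpos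
  have htd : t * d = 2 ^ n - 1 := Nat.div_mul_cancel hdN
  have hmem : g0 ^ t ∈ K := by
    rw [hK, MonoidHom.mem_ker, powMonoidHom_apply, ← pow_mul]
    apply orderOf_dvd_iff_pow_eq_one.mp
    rw [hord]
    obtain ⟨s', rfl⟩ := hds
    calc 2 ^ n - 1 ∣ (2 ^ n - 1) * s' := Dvd.intro s' rfl
      _ = t * (d * s') := by rw [← htd]; ring
  have hordh : orderOf (g0 ^ t) = d := by
    rw [orderOf_pow' g0 htpos.ne', hord]
    rw [Nat.gcd_eq_right (Nat.div_dvd_of_dvd hdN)]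
    exact Nat.div_div_self hdN (by omega)
  have : orderOf ((⟨g0 ^ t, hmem⟩ : K)) = d := by
    rw [Subgroup.orderOf_mk]; exact hordh
  rw [← this]
  exact orderOf_dvd_card

lemma S0_mod (hn : 1 ≤ n) (hcard : Fintype.card F = 2 ^ n) (s d : ℕ) (hs1 : 1 ≤ s)
    (hds : d ∣ s) (hdN : d ∣ 2 ^ n - 1) (u : F) :
    (d : ℤ) ∣ (∑ x : F, chi n (u * x ^ s)) - 1 := by
  have hsplit : ∑ x : F, chi n (u * x ^ s)
      = chi n (u * (0:F) ^ s) + ∑ x ∈ Finset.univ.erase (0:F), chi n (u * x ^ s) :=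
    (Finset.add_sum_erase Finset.univ _ (Finset.mem_univ (0:F))).symm
  have h0 : chi n (u * (0:F) ^ s) = 1 := by
    rw [zero_pow (by omega), mul_zero, chi_zero]
  rw [hsplit, h0, add_sub_cancel_left]
  -- convert to a sum over units
  have hunits : ∑ x ∈ Finset.univ.erase (0:F), chi n (u * x ^ s)
      = ∑ y : Fˣ, chi n (u * ((y ^ s : Fˣ) : F)) := by
    rw [show (Finset.univ : Finset Fˣ) = Finset.univ from rfl]
    refine (Finset.sum_bij' (fun (y : Fˣ) _ => (y : F))
      (fun (x : F) hx => Units.mk0 x (Finset.ne_of_mem_erase hx)) ?_ ?_ ?_ ?_ ?_).symm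
    · intro y _
      exact Finset.mem_erase.mpr ⟨Units.ne_zero y, Finset.mem_univ _⟩
    · intro x _; exact Finset.mem_univ _
    · intro y _; exact Units.ext rfl
    · intro x _; rfl
    · intro y _
      rw [Units.val_pow_eq_pow_val]
  rw [hunits]
  rw [← Finset.sum_fiberwise' Finset.univ (fun y : Fˣ => y ^ s)
    (fun z : Fˣ => chi n (u * (z : F)))]
  refine Finset.dvd_sum fun j _ => ?_
  rw [Finset.sum_const]
  have := fiber_card_dvd n s d hn hcard hds hdN j
  exact Dvd.dvd.mul_right (Int.natCast_dvd_natCast.mpr this) _ |>.trans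
    (by rw [nsmul_eq_mul])
end Gsec
/-- If `n/e` is even (`e = gcd(k,n)`, `n = 2m`, `e ∣ m`), `u, v ≠ 0` and `u` is not a
`(2^e+1)`-th power, then `L_u(x) = u^{2^k} x^{2^{2k}} + u x` is a bijection of `F`, and
for the (unique) `x_u` with `L_u(x_u) = v^{2^k}` one has
`S(u,v) = (−1)^{m/e} 2^m χ1(u x_u^{2^k+1})`. -/
theorem weil_sum_gold_even_nonpow (n k e m : ℕ) (hk1 : 1 ≤ k) (hkn : k < n)
    (he : e = Nat.gcd k n) (heven : Even (n / e)) (hm : n = 2 * m) (hem : e ∣ m)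
    {F : Type*} [Field F] [Fintype F] [DecidableEq F] [CharP F 2]
    (hcard : Fintype.card F = 2 ^ n)
    (u v : F) (hu : u ≠ 0) (hv : v ≠ 0)
    (hpow : ¬ ∃ w : F, w ≠ 0 ∧ w ^ (2 ^ e + 1) = u) :
    Function.Bijective (fun x : F => u ^ (2 ^ k) * x ^ (2 ^ (2 * k)) + u * x) ∧
    ∀ xu : F, u ^ (2 ^ k) * xu ^ (2 ^ (2 * k)) + u * xu = v ^ (2 ^ k) →
      ∑ x : F, chi n (u * x ^ (2 ^ k + 1) + v * x) =
        (-1) ^ (m / e) * 2 ^ m * chi n (u * xu ^ (2 ^ k + 1)) := by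
  have hn1 : 1 ≤ n := by omega
  have hkn' : k ≤ n := le_of_lt hkn
  have hgcdpos : 0 < Nat.gcd k n := Nat.gcd_pos_of_pos_left n hk1
  have he1 : 1 ≤ e := by rw [he]; exact hgcdpos
  have hek : e ∣ k := by rw [he]; exact Nat.gcd_dvd_left k n
  have hen : e ∣ n := by rw [he]; exact Nat.gcd_dvd_right k n
  have h2en : 2 * e ∣ n := by rw [hm]; exact mul_dvd_mul_left 2 hem
  have hko : Odd (k / e) := by
    by_contra hodd
    rw [Nat.not_odd_iff_even] at hodd
    have h2k : 2 ∣ k / e := hodd.two_dvd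
    have h2n : 2 ∣ n / e := heven.two_dvd
    have hcop : Nat.Coprime (k / e) (n / e) := by
      rw [he]; exact Nat.coprime_div_gcd_div_gcd hgcdpos
    have : (2:ℕ) ∣ Nat.gcd (k / e) (n / e) := Nat.dvd_gcd h2k h2n
    rw [hcop] at this
    omega
  have hker : ∀ w : F, u ^ (2 ^ k) * w ^ (2 ^ (2 * k)) + u * w = 0 → w = 0 :=
    fun w hw => ker_trivial n k e hkn' he1 hek h2en hko hcard hu hpow hw
  refine ⟨L_inj k u hker, ?_⟩
  intro xu hxu
  rw [S_shift n k hn1 hcard hkn' u v xu hxu]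
  have hsq := S0_sq n k hn1 hcard hkn' u hker
  set S0 := ∑ x : F, chi n (u * x ^ (2 ^ k + 1)) with hS0
  have hS0pm : S0 = 2 ^ m ∨ S0 = -(2 ^ m) := by
    have hfac : (S0 - 2 ^ m) * (S0 + 2 ^ m) = 0 := by
      have h2n : (2:ℤ) ^ n = (2 ^ m) ^ 2 := by rw [hm, mul_comm 2 m, pow_mul]
      rw [h2n] at hsq
      linear_combination hsq
    rcases mul_eq_zero.mp hfac with h | h
    · left; linarith
    · right; linarith
  -- divisibility facts
  have hdk : (2 ^ e + 1) ∣ (2 ^ k + 1) := dvd_two_pow_add_one hek hko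
  have hd2e : (2 ^ e + 1) ∣ (2 ^ (2 * e) - 1) := ⟨2 ^ e - 1, two_pow_mul_sub_one.symm⟩
  have hdN : (2 ^ e + 1) ∣ (2 ^ n - 1) := hd2e.trans (two_pow_sub_one_dvd h2en)
  have hdvd1 : ((2 ^ e + 1 : ℕ) : ℤ) ∣ S0 - 1 :=
    S0_mod n hn1 hcard (2 ^ k + 1) (2 ^ e + 1) (Nat.le_add_left 1 _) hdk hdN u
  have hdvd2 : ((2 ^ e + 1 : ℕ) : ℤ) ∣ (2:ℤ) ^ m - (-1) ^ (m / e) := by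
    have h := sub_dvd_pow_sub_pow ((2:ℤ) ^ e) (-1) (m / e)
    have hme : e * (m / e) = m := Nat.mul_div_cancel' hem
    rw [← pow_mul, hme, sub_neg_eq_add] at h
    convert h using 2
    · rfl
    push_cast
    ring
  have h3le : (3 : ℤ) ≤ ((2 ^ e + 1 : ℕ) : ℤ) := by
    have : (2:ℕ) ≤ 2 ^ e := by
      calc (2:ℕ) = 2 ^ 1 := by norm_num
        _ ≤ 2 ^ e := Nat.pow_le_pow_right (by norm_num) he1
    exact_mod_cast by omega
  have hfin : S0 = (-1) ^ (m / e) * 2 ^ m := by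
    rcases Nat.even_or_odd (m / e) with hp | hp
    · rw [hp.neg_one_pow] at hdvd2 ⊢
      rw [one_mul]
      rcases hS0pm with h | h
      · exact h
      · exfalso
        have hd2 : ((2 ^ e + 1 : ℕ) : ℤ) ∣ (-2 : ℤ) := by
          have := dvd_add hdvd1 hdvd2
          rw [h] at this
          convert this using 1
          · rfl
          ring
        have := Int.le_of_dvd (by norm_num) hd2.neg_right
        omega
    · rw [hp.neg_one_pow] at hdvd2 ⊢
      rcases hS0pm with h | h
      · exfalso
        have hd2 : ((2 ^ e + 1 : ℕ) : ℤ) ∣ (2 : ℤ) := by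
          have := dvd_sub hdvd2 hdvd1
          rw [h] at this
          convert this using 1
          · rfl
          ring
        have := Int.le_of_dvd (by norm_num) hd2
        omega
      · rw [h]; ring
  rw [hfin]
  ring
end

section
/- Let n ≥ 2 and 1 ≤ k < n with e = gcd(k, n), and suppose n/e is odd. Then for every b ∈ F_q^*, the number of pairs (x, y) ∈ F_q × F_q satisfying x^{2^k+1} + y^{2^k+1} = b and (x+1)^{2^k+1} + (y+1)^{2^k+1} = b equals 0 if Tr_e(b^{2^{n−1}}) = 0, and equals 2^e if Tr_e(b^{2^{n−1}}) ≠ 0. (Here b^{2^{n−1}} is the unique square root of b in F_q.) -/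
open Finset Polynomial

/-- The relative trace `Tr_e : F → F_{2^e}`, viewed inside `F`. -/
def relTr (n e : ℕ) {F : Type*} [Field F] (x : F) : F :=
  ∑ i ∈ Finset.range (n / e), x ^ (2 ^ (e * i))

set_option linter.unusedSectionVars false
set_option linter.unusedVariables false
set_option maxHeartbeats 1000000

section powh

variable {F : Type*} [Field F]

private lemma pow_two_pow_mul (x : F) {a : ℕ} (hx : x ^ 2 ^ a = x) (q : ℕ) :
    x ^ 2 ^ (a * q) = x := by
  induction q with
  | zero => simp
  | succ q ih => rw [Nat.mul_succ, pow_add, pow_mul, ih, hx]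

private lemma pow_two_pow_mod (x : F) {a b : ℕ} (hxa : x ^ 2 ^ a = x) (hxb : x ^ 2 ^ b = x) :
    x ^ 2 ^ (b % a) = x := by
  have h := pow_two_pow_mul x hxa (b / a)
  calc x ^ 2 ^ (b % a) = (x ^ 2 ^ (a * (b / a))) ^ 2 ^ (b % a) := by rw [h]
    _ = x ^ 2 ^ (a * (b / a) + b % a) := by rw [← pow_mul, ← pow_add]
    _ = x ^ 2 ^ b := by rw [Nat.div_add_mod]
    _ = x := hxb

private lemma pow_two_pow_gcd (x : F) : ∀ a b : ℕ, x ^ 2 ^ a = x → x ^ 2 ^ b = x →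
    x ^ 2 ^ Nat.gcd a b = x := by
  intro a b
  induction a, b using Nat.gcd.induction with
  | H0 b => intro _ h; simpa using h
  | H1 a b ha ih =>
      intro hxa hxb
      rw [Nat.gcd_rec]
      exact ih (pow_two_pow_mod x hxa hxb) hxa

end powh

section aux

variable {F : Type*} [Field F] [Fintype F] [DecidableEq F]

private lemma fiber_card_eq (f : F →+ F) {a x0 : F} (h : f x0 = a) :
    (univ.filter fun x => f x = a).card = (univ.filter fun x => f x = 0).card := by
  apply Finset.card_nbij' (fun x => x - x0) (fun t => t + x0)
  · intro x hx
    simp only [Finset.mem_coe, mem_filter, mem_univ, true_and] at hx ⊢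
    rw [map_sub, hx, h, sub_self]
  · intro t ht
    simp only [Finset.mem_coe, mem_filter, mem_univ, true_and] at ht ⊢
    rw [map_add, ht, h, zero_add]
  · intro x _; simp
  · intro t _; simp

private lemma image_mul_ker_card (f : F →+ F) :
    (univ.image f).card * (univ.filter fun x => f x = 0).card = Fintype.card F := by
  have h : (univ : Finset F).card = ∑ a ∈ univ.image f, (univ.filter fun x => f x = a).card :=
    Finset.card_eq_sum_card_fiberwise (fun x _ => Finset.mem_image_of_mem f (mem_univ x))
  have h2 : ∑ a ∈ univ.image f, (univ.filter fun x => f x = a).card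
      = ∑ _a ∈ univ.image f, (univ.filter fun x => f x = 0).card := by
    refine Finset.sum_congr rfl fun a ha => ?_
    obtain ⟨x0, _, hx0⟩ := Finset.mem_image.mp ha
    exact fiber_card_eq f hx0
  rw [← Finset.card_univ, h, h2, Finset.sum_const, smul_eq_mul]

private lemma card_filter_root_le {p : F[X]} (hp : p ≠ 0) :
    (univ.filter fun x => p.eval x = 0).card ≤ p.natDegree := by
  have h1 : (univ.filter fun x => p.eval x = 0) ⊆ p.roots.toFinset := by
    intro x hx
    rw [Multiset.mem_toFinset, Polynomial.mem_roots hp]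
    exact (mem_filter.mp hx).2
  exact le_trans (Finset.card_le_card h1)
    (le_trans (Multiset.toFinset_card_le _) (Polynomial.card_roots' p))

private lemma mul_eq_of_le_of_le {a b A B : ℕ} (ha : a ≤ A) (hb : b ≤ B)
    (h : a * b = A * B) (hA : 0 < A) (hB : 0 < B) : a = A ∧ b = B := by
  have hbB : b = B := by
    have h1 : A * B ≤ A * b := by
      calc A * B = a * b := h.symm
        _ ≤ A * b := Nat.mul_le_mul_right b ha
    exact le_antisymm hb (Nat.le_of_mul_le_mul_left h1 hA)
  subst hbB
  exact ⟨Nat.eq_of_mul_eq_mul_right (lt_of_lt_of_le hB (le_refl b)) h, rfl⟩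

end aux

section trace

variable {F : Type*} [Field F] [CharP F 2]

private lemma frob_add (x y : F) (j : ℕ) : (x + y) ^ 2 ^ j = x ^ 2 ^ j + y ^ 2 ^ j :=
  add_pow_char_pow x y 2 j

private lemma relTr_add (n e : ℕ) (x y : F) :
    relTr n e (x + y) = relTr n e x + relTr n e y := by
  unfold relTr
  rw [← Finset.sum_add_distrib]
  exact Finset.sum_congr rfl fun i _ => frob_add x y (e * i)

private lemma relTr_pow2 (n e : ℕ) (x : F) (j : ℕ) :
    (relTr n e x) ^ 2 ^ j = relTr n e (x ^ 2 ^ j) := by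
  unfold relTr
  rw [sum_pow_char_pow]
  refine Finset.sum_congr rfl fun i _ => ?_
  rw [← pow_mul, ← pow_mul, mul_comm (2 ^ (e * i)) (2 ^ j)]

private lemma relTr_frob (n e : ℕ) (hem : e * (n / e) = n)
    (x : F) (hx : x ^ 2 ^ n = x) :
    relTr n e (x ^ 2 ^ e) = relTr n e x := by
  unfold relTr
  set m := n / e with hmdef
  set f : ℕ → F := fun i => x ^ 2 ^ (e * i) with hf
  have key : ∀ i ∈ range m, (x ^ 2 ^ e) ^ 2 ^ (e * i) = f (i + 1) := by
    intro i _
    rw [hf]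
    dsimp only
    rw [← pow_mul, ← pow_add, Nat.mul_succ, add_comm (e * i) e]
  rw [Finset.sum_congr rfl key]
  have hfm : f m = f 0 := by
    rw [hf]; dsimp only
    rw [mul_zero, pow_zero, pow_one, hem, hx]
  have h1 : (∑ i ∈ range m, f (i + 1)) + f 0 = (∑ i ∈ range m, f i) + f m := by
    rw [← Finset.sum_range_succ', Finset.sum_range_succ]
  rw [hfm] at h1
  exact add_right_cancel h1

private lemma relTr_frob_mul (n e : ℕ) (hem : e * (n / e) = n)
    (hq : ∀ y : F, y ^ 2 ^ n = y) (x : F) : ∀ t : ℕ,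
    relTr n e (x ^ 2 ^ (e * t)) = relTr n e x := by
  intro t
  induction t with
  | zero => simp
  | succ t ih =>
      have h : x ^ 2 ^ (e * (t + 1)) = (x ^ 2 ^ (e * t)) ^ 2 ^ e := by
        rw [← pow_mul, ← pow_add, Nat.mul_succ]
      rw [h, relTr_frob n e hem _ (hq _), ih]

private lemma relTr_fixed (n e : ℕ) (hem : e * (n / e) = n)
    (x : F) (hx : x ^ 2 ^ n = x) :
    (relTr n e x) ^ 2 ^ e = relTr n e x := by
  rw [relTr_pow2, relTr_frob n e hem x hx]

private lemma relTr_of_fixed {n e : ℕ} (hodd : Odd (n / e)) {c : F} (hc : c ^ 2 ^ e = c) :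
    relTr n e c = c := by
  unfold relTr
  have h : ∀ i ∈ range (n / e), c ^ 2 ^ (e * i) = c := fun i _ => pow_two_pow_mul c hc i
  rw [Finset.sum_congr rfl h, Finset.sum_const, card_range]
  obtain ⟨t, ht⟩ := hodd
  rw [ht]
  rw [add_nsmul, one_nsmul, mul_comm, mul_nsmul]
  rw [two_nsmul, CharTwo.add_self_eq_zero, zero_add]

private lemma relTr_mul_fixed {n e : ℕ} (b : F) {c : F} (hc : c ^ 2 ^ e = c) :
    relTr n e (b * c⁻¹) = relTr n e b * c⁻¹ := by
  unfold relTr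
  rw [Finset.sum_mul]
  refine Finset.sum_congr rfl fun i _ => ?_
  rw [mul_pow, inv_pow, pow_two_pow_mul c hc i]

end trace

/-- If `n/e` is odd (`e = gcd(k,n)`), the BCT entry of the Gold function `x^{2^k+1}` at
`(1,b)` (with `c = 1`) equals `0` if `Tr_e(√b) = 0` and `2^e` if `Tr_e(√b) ≠ 0`, where
`√b = b^{2^{n−1}}`. -/
theorem gold_BCT_entry_odd (n k e : ℕ) (hn : 2 ≤ n) (hk1 : 1 ≤ k) (hkn : k < n)
    (he : e = Nat.gcd k n) (hodd : Odd (n / e))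
    {F : Type*} [Field F] [Fintype F] [DecidableEq F] [CharP F 2]
    (hcard : Fintype.card F = 2 ^ n)
    (b : F) (hb : b ≠ 0) :
    (relTr n e (b ^ (2 ^ (n - 1))) = 0 →
        (Finset.univ.filter fun p : F × F =>
            p.1 ^ (2 ^ k + 1) + p.2 ^ (2 ^ k + 1) = b ∧
            (p.1 + 1) ^ (2 ^ k + 1) + (p.2 + 1) ^ (2 ^ k + 1) = b).card = 0) ∧
    (relTr n e (b ^ (2 ^ (n - 1))) ≠ 0 →
        (Finset.univ.filter fun p : F × F =>
            p.1 ^ (2 ^ k + 1) + p.2 ^ (2 ^ k + 1) = b ∧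
            (p.1 + 1) ^ (2 ^ k + 1) + (p.2 + 1) ^ (2 ^ k + 1) = b).card = 2 ^ e) := by
  classical
  haveI : Fact (Nat.Prime 2) := ⟨Nat.prime_two⟩
  have h2' : (2 : F) = 0 := CharTwo.two_eq_zero
  have hq : ∀ x : F, x ^ 2 ^ n = x := fun x => by rw [← hcard]; exact FiniteField.pow_card x
  have he1 : 0 < e := he ▸ Nat.gcd_pos_of_pos_left n hk1
  have hek : e ∣ k := he ▸ Nat.gcd_dvd_left k n
  have hen : e ∣ n := he ▸ Nat.gcd_dvd_right k n
  have hem : e * (n / e) = n := Nat.mul_div_cancel' hen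
  have hele : e ≤ n := Nat.le_of_dvd (by omega) hen
  have hm1 : 1 ≤ n / e := Nat.one_le_div_iff he1 |>.mpr hele
  -- the additive maps
  set T : F →+ F := AddMonoidHom.mk' (relTr n e) (relTr_add n e) with hT
  set L : F →+ F := AddMonoidHom.mk' (fun x => x ^ 2 ^ k + x)
    (by intro u v; rw [add_pow_char_pow u v 2 k]; ring) with hL
  -- key finsets
  set S : Finset F := univ.filter fun c : F => c ^ 2 ^ e = c with hSdef
  set KT : Finset F := univ.filter fun x : F => relTr n e x = 0 with hKTdef
  -- card S ≤ 2^e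
  have h_S_le : S.card ≤ 2 ^ e := by
    set p : F[X] := X ^ 2 ^ e - X with hp
    have hpne : p ≠ 0 := by
      intro h0
      have hc : p.coeff (2 ^ e) = 1 := by
        have h1ne : (2 : ℕ) ^ e ≠ 1 := by
          have := Nat.one_lt_two_pow_iff (n := e) |>.mpr (by omega)
          omega
        rw [hp, coeff_sub, coeff_X_pow, if_pos rfl, coeff_X_of_ne_one h1ne, sub_zero]
      rw [h0, coeff_zero] at hc
      exact one_ne_zero hc.symm
    have hSeq : S = univ.filter fun x => p.eval x = 0 := by
      ext x
      simp only [hSdef, hp, mem_filter, mem_univ, true_and, eval_sub, eval_pow, eval_X,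
        sub_eq_zero]
    have hdeg : p.natDegree ≤ 2 ^ e := by
      refine le_trans (natDegree_sub_le _ _) ?_
      simp [Nat.one_le_two_pow]
    rw [hSeq]
    exact le_trans (card_filter_root_le hpne) hdeg
  -- card KT ≤ 2^(n-e)
  have h_KT_le : KT.card ≤ 2 ^ (n - e) := by
    set pT : F[X] := ∑ i ∈ range (n / e), X ^ 2 ^ (e * i) with hpT
    have hme : e * (n / e - 1) = n - e := by
      obtain ⟨m', hm'⟩ : ∃ m', n / e = m' + 1 := ⟨n / e - 1, by omega⟩
      have h3 : e * m' + e = n := by rw [← hem, hm', Nat.mul_succ]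
      rw [hm']
      simp only [Nat.add_sub_cancel]
      omega
    have hpTne : pT ≠ 0 := by
      intro h0
      have hc : pT.coeff (2 ^ (e * (n / e - 1))) = 1 := by
        rw [hpT, finset_sum_coeff]
        rw [Finset.sum_eq_single_of_mem (n / e - 1) (mem_range.mpr (by omega))]
        · rw [coeff_X_pow, if_pos rfl]
        · intro i hi hine
          rw [coeff_X_pow, if_neg]
          intro hpow
          have h4 := Nat.pow_right_injective (le_refl 2) hpow
          exact hine (Nat.eq_of_mul_eq_mul_left he1 h4).symm
      rw [h0, coeff_zero] at hc
      exact one_ne_zero hc.symm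
    have hKTeq : KT = univ.filter fun x => pT.eval x = 0 := by
      ext x
      simp only [hKTdef, hpT, mem_filter, mem_univ, true_and, eval_finset_sum, eval_pow, eval_X]
      rfl
    have hdeg : pT.natDegree ≤ 2 ^ (n - e) := by
      rw [hpT]
      refine natDegree_sum_le_of_forall_le _ _ fun i hi => ?_
      rw [natDegree_X_pow]
      refine le_trans (Nat.pow_le_pow_right (by norm_num) ?_) (le_of_eq (congrArg _ hme))
      exact Nat.mul_le_mul_left e (by have := mem_range.mp hi; omega)
    rw [hKTeq]
    exact le_trans (card_filter_root_le hpTne) hdeg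
  -- trace counting
  have h_T_count : (univ.image (relTr n e (F := F))).card * KT.card = 2 ^ n := by
    have h := image_mul_ker_card T
    rw [hcard] at h
    have hTcoe : ⇑T = relTr n e (F := F) := rfl
    rw [hTcoe] at h
    exact h
  have h_IT_sub : univ.image (relTr n e (F := F)) ⊆ S := by
    intro a ha
    obtain ⟨x, _, rfl⟩ := Finset.mem_image.mp ha
    exact mem_filter.mpr ⟨mem_univ _, relTr_fixed n e hem x (hq x)⟩
  have h_IT_le : (univ.image (relTr n e (F := F))).card ≤ 2 ^ e :=
    le_trans (Finset.card_le_card h_IT_sub) h_S_le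
  have hpow_split : (2 : ℕ) ^ e * 2 ^ (n - e) = 2 ^ n := by
    rw [← pow_add]
    congr 1
    omega
  obtain ⟨h_IT_card, h_KT_card⟩ :=
    mul_eq_of_le_of_le h_IT_le h_KT_le (by rw [h_T_count, hpow_split]) (by positivity)
      (by positivity)
  have h_S_card : S.card = 2 ^ e :=
    le_antisymm h_S_le (h_IT_card ▸ Finset.card_le_card h_IT_sub)
  -- kernel of L
  have h_KL_eq : (univ.filter fun x : F => x ^ 2 ^ k + x = 0) = S := by
    ext x
    simp only [hSdef, mem_filter, mem_univ, true_and]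
    constructor
    · intro hx
      have hfix : x ^ 2 ^ k = x := by linear_combination hx - x * h2'
      rw [he]
      exact pow_two_pow_gcd x k n hfix (hq x)
    · intro hx
      obtain ⟨t, rfl⟩ := hek
      rw [pow_two_pow_mul x hx t, CharTwo.add_self_eq_zero]
  have h_L_ker_card : (univ.filter fun x : F => x ^ 2 ^ k + x = 0).card = 2 ^ e := by
    rw [h_KL_eq, h_S_card]
  have h_IL_sub : univ.image (fun x : F => x ^ 2 ^ k + x) ⊆ KT := by
    intro a ha
    obtain ⟨x, _, rfl⟩ := Finset.mem_image.mp ha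
    refine mem_filter.mpr ⟨mem_univ _, ?_⟩
    obtain ⟨t, htk⟩ := hek
    rw [relTr_add, htk, relTr_frob_mul n e hem hq x t, CharTwo.add_self_eq_zero]
  have h_IL_card : (univ.image (fun x : F => x ^ 2 ^ k + x)).card = 2 ^ (n - e) := by
    have h := image_mul_ker_card L
    rw [hcard] at h
    have hLcoe : ⇑L = fun x : F => x ^ 2 ^ k + x := rfl
    rw [hLcoe] at h
    rw [h_L_ker_card] at h
    have h2pos : 0 < (2 : ℕ) ^ e := by positivity
    refine Nat.eq_of_mul_eq_mul_right h2pos ?_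
    rw [h, mul_comm, hpow_split]
  have h_IL_eq : univ.image (fun x : F => x ^ 2 ^ k + x) = KT :=
    Finset.eq_of_subset_of_card_le h_IL_sub (by rw [h_IL_card, h_KT_card])
  -- fiber counts of L
  have h_fiber : ∀ a : F, (univ.filter fun x : F => x ^ 2 ^ k + x = a).card
      = if relTr n e a = 0 then 2 ^ e else 0 := by
    intro a
    by_cases hTa : relTr n e a = 0
    · rw [if_pos hTa]
      have ha : a ∈ univ.image (fun x : F => x ^ 2 ^ k + x) :=
        h_IL_eq ▸ mem_filter.mpr ⟨mem_univ a, hTa⟩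
      obtain ⟨x0, _, hx0⟩ := Finset.mem_image.mp ha
      have hf := fiber_card_eq L (a := a) (x0 := x0) hx0
      exact hf.trans h_L_ker_card
    · rw [if_neg hTa, Finset.card_eq_zero, Finset.filter_eq_empty_iff]
      intro x _ hx
      apply hTa
      have hmem : (x ^ 2 ^ k + x) ∈ KT := h_IL_eq ▸ Finset.mem_image_of_mem _ (mem_univ x)
      rw [hx] at hmem
      exact (mem_filter.mp hmem).2
  -- square root and its trace
  set s : F := b ^ 2 ^ (n - 1) with hs
  have hs2 : s ^ 2 = b := by
    rw [hs, ← pow_mul, ← pow_succ, Nat.sub_add_cancel (by omega : 1 ≤ n)]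
    exact hq b
  set t0 : F := relTr n e s with ht0def
  have hTb : relTr n e b = t0 ^ 2 := by
    have h := relTr_pow2 n e s 1
    rw [pow_one] at h
    rw [← hs2]
    exact h.symm
  -- expansion identity
  have hexp : ∀ u c : F, u ^ (2 ^ k + 1) + (u + c) ^ (2 ^ k + 1)
      = u ^ 2 ^ k * c + c ^ 2 ^ k * u + c ^ 2 ^ k * c := by
    intro u c
    rw [pow_succ, pow_succ, add_pow_char_pow u c 2 k]
    linear_combination (u ^ 2 ^ k * u) * h2'
  -- characterization of solution pairs
  have hchar : ∀ x y : F,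
      (x ^ (2 ^ k + 1) + y ^ (2 ^ k + 1) = b ∧
        (x + 1) ^ (2 ^ k + 1) + (y + 1) ^ (2 ^ k + 1) = b)
      ↔ (((x + y) ^ 2 ^ e = x + y ∧ x + y ≠ 0) ∧
          x ^ 2 ^ k + x = b * (x + y)⁻¹ + (x + y)) := by
    intro x y
    have hy : y = x + (x + y) := by linear_combination (-x) * h2'
    have h1eq : x ^ (2 ^ k + 1) + y ^ (2 ^ k + 1)
        = x ^ 2 ^ k * (x + y) + (x + y) ^ 2 ^ k * x + (x + y) ^ 2 ^ k * (x + y) := by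
      conv_lhs => rw [hy]
      exact hexp x (x + y)
    have hy1 : y + 1 = (x + 1) + (x + y) := by linear_combination (-x) * h2'
    have h2eq : (x + 1) ^ (2 ^ k + 1) + (y + 1) ^ (2 ^ k + 1)
        = (x ^ 2 ^ k + 1) * (x + y) + (x + y) ^ 2 ^ k * (x + 1)
          + (x + y) ^ 2 ^ k * (x + y) := by
      have e1 := hexp (x + 1) (x + y)
      rw [add_pow_char_pow x 1 2 k, one_pow] at e1
      conv_lhs => rw [hy1]
      exact e1
    constructor
    · rintro ⟨h1, h2⟩
      rw [h1eq] at h1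
      rw [h2eq] at h2
      have hC : (x + y) ^ 2 ^ k = x + y := by
        linear_combination h2 - h1 - (x + y) * h2'
      have hS2 : (x + y) ^ 2 ^ e = x + y := by
        rw [he]; exact pow_two_pow_gcd (x + y) k n hC (hq (x + y))
      have hc0 : x + y ≠ 0 := by
        intro h0
        apply hb
        rw [← h1, h0]
        have h2k : (2 : ℕ) ^ k ≠ 0 := by positivity
        simp [zero_pow h2k]
      have hG : (x ^ 2 ^ k + x) * (x + y) = b + (x + y) ^ 2 := by
        rw [hC] at h1
        linear_combination h1 - (x + y) ^ 2 * h2'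
      refine ⟨⟨hS2, hc0⟩, ?_⟩
      field_simp
      linear_combination hG
    · rintro ⟨⟨hS2, hc0⟩, heq⟩
      have hC : (x + y) ^ 2 ^ k = x + y := by
        obtain ⟨t, rfl⟩ := hek
        exact pow_two_pow_mul (x + y) hS2 t
      have hG : (x ^ 2 ^ k + x) * (x + y) = b + (x + y) ^ 2 := by
        rw [heq]
        field_simp
      constructor
      · rw [h1eq, hC]
        linear_combination hG + (x + y) ^ 2 * h2'
      · rw [h2eq, hC]
        linear_combination hG + ((x + y) ^ 2 + (x + y)) * h2'
  -- the two pair-sets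
  set P := (Finset.univ.filter fun p : F × F =>
      p.1 ^ (2 ^ k + 1) + p.2 ^ (2 ^ k + 1) = b ∧
      (p.1 + 1) ^ (2 ^ k + 1) + (p.2 + 1) ^ (2 ^ k + 1) = b) with hPdef
  set Q := (Finset.univ.filter fun p : F × F =>
      ((p.2 ^ 2 ^ e = p.2 ∧ p.2 ≠ 0) ∧
        p.1 ^ 2 ^ k + p.1 = b * p.2⁻¹ + p.2)) with hQdef
  have hinv : ∀ p : F × F,
      (fun p : F × F => (p.1, p.1 + p.2)) ((fun p : F × F => (p.1, p.1 + p.2)) p) = p := by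
    intro p
    have h : p.1 + (p.1 + p.2) = p.2 := by
      rw [← add_assoc, CharTwo.add_self_eq_zero, zero_add]
    simp [h]
  have hPQ : P.card = Q.card := by
    apply Finset.card_equiv ⟨fun p : F × F => (p.1, p.1 + p.2),
      fun p : F × F => (p.1, p.1 + p.2), hinv, hinv⟩
    intro p
    rw [hPdef, hQdef]
    simp only [Finset.mem_filter, Finset.mem_univ, true_and, Equiv.coe_fn_mk]
    exact hchar p.1 p.2
  have hQsum : Q.card = ∑ c ∈ univ, (Q.filter fun p : F × F => p.2 = c).card :=
    Finset.card_eq_sum_card_fiberwise fun p _ => mem_univ p.2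
  have hstage1 : ∀ c : F, (c ^ 2 ^ e = c ∧ c ≠ 0) →
      (Q.filter fun p : F × F => p.2 = c).card
        = (univ.filter fun x : F => x ^ 2 ^ k + x = b * c⁻¹ + c).card := by
    intro c hcg
    apply Finset.card_nbij' (fun p => p.1) (fun x => (x, c))
    · intro p hp
      simp only [Finset.mem_coe, hQdef, Finset.mem_filter, Finset.mem_univ, true_and] at hp
      obtain ⟨⟨_, hpe⟩, hp2⟩ := hp
      simp only [Finset.mem_coe, Finset.mem_filter, Finset.mem_univ, true_and]
      rw [← hp2]
      exact hpe
    · intro x hx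
      simp only [Finset.mem_coe, Finset.mem_filter, Finset.mem_univ, true_and] at hx
      simp only [Finset.mem_coe, hQdef, Finset.mem_filter, Finset.mem_univ, true_and]
      exact ⟨⟨hcg, hx⟩, trivial⟩
    · intro p hp
      simp only [Finset.mem_coe, hQdef, Finset.mem_filter, Finset.mem_univ, true_and] at hp
      exact Prod.ext rfl hp.2.symm
    · intro x hx
      rfl
  have hstage0 : ∀ c : F, ¬(c ^ 2 ^ e = c ∧ c ≠ 0) →
      (Q.filter fun p : F × F => p.2 = c).card = 0 := by
    intro c hcg
    rw [Finset.card_eq_zero, Finset.filter_eq_empty_iff]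
    intro p hp hp2
    simp only [hQdef, Finset.mem_filter, Finset.mem_univ, true_and] at hp
    exact hcg (hp2 ▸ hp.1)
  have hcrit : ∀ c : F, ((c ^ 2 ^ e = c ∧ c ≠ 0) ∧ relTr n e (b * c⁻¹ + c) = 0)
      ↔ (c = t0 ∧ t0 ≠ 0) := by
    intro c
    constructor
    · rintro ⟨⟨hc1, hc2⟩, hc3⟩
      rw [relTr_add, relTr_mul_fixed b hc1, relTr_of_fixed hodd hc1, hTb] at hc3
      have h4 : t0 ^ 2 + c ^ 2 = 0 := by
        have h5 := congrArg (· * c) hc3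
        simp only [add_mul, zero_mul] at h5
        rw [mul_assoc, inv_mul_cancel₀ hc2, mul_one] at h5
        linear_combination h5
      have h6 : c = t0 := by
        have h7 : (c + t0) ^ 2 = 0 := by
          rw [add_pow_char c t0 2]
          linear_combination h4
        have h8 : c + t0 = 0 := (pow_eq_zero_iff (by norm_num : 2 ≠ 0)).mp h7
        linear_combination h8 - t0 * h2'
      exact ⟨h6, h6 ▸ hc2⟩
    · rintro ⟨rfl, hne⟩
      have hfix : t0 ^ 2 ^ e = t0 := relTr_fixed n e hem s (hq s)
      refine ⟨⟨hfix, hne⟩, ?_⟩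
      rw [relTr_add, relTr_mul_fixed b hfix, relTr_of_fixed hodd hfix, hTb]
      rw [sq, mul_assoc, mul_inv_cancel₀ hne, mul_one, CharTwo.add_self_eq_zero]
  have hinner : ∀ c : F, (Q.filter fun p : F × F => p.2 = c).card
      = if c = t0 ∧ t0 ≠ 0 then 2 ^ e else 0 := by
    intro c
    by_cases hcg : c ^ 2 ^ e = c ∧ c ≠ 0
    · rw [hstage1 c hcg, h_fiber]
      by_cases hc3 : relTr n e (b * c⁻¹ + c) = 0
      · rw [if_pos hc3, if_pos ((hcrit c).mp ⟨hcg, hc3⟩)]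
      · rw [if_neg hc3, if_neg]
        intro hfin
        exact hc3 ((hcrit c).mpr hfin).2
    · rw [hstage0 c hcg, if_neg]
      intro hfin
      exact hcg ((hcrit c).mpr hfin).1
  have hPsum : P.card = ∑ c ∈ univ, (if c = t0 ∧ t0 ≠ 0 then 2 ^ e else 0) := by
    rw [hPQ, hQsum]
    exact Finset.sum_congr rfl fun c _ => hinner c
  constructor
  · intro ht0
    rw [hPsum]
    refine Finset.sum_eq_zero fun c _ => ?_
    rw [if_neg]
    rintro ⟨_, hne⟩
    exact hne ht0
  · intro ht0
    rw [hPsum, Finset.sum_eq_single_of_mem t0 (mem_univ t0)]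
    · rw [if_pos ⟨rfl, ht0⟩]
    · intro c _ hne
      rw [if_neg]
      rintro ⟨h1, _⟩
      exact hne h1
end
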